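/- In a finite generalised quadrangle of order (s,t) with s,t ≥ 1, s+t divides st(st+1). -/

import Mathlib

/-- A (finite) generalised quadrangle of order `(s, t)`: every line is incident
with exactly `s + 1` points, every point is incident with exactly `t + 1` lines,
any two distinct points lie on at most one common line, and for every
non-incident point-line pair `(p, l)` there is a unique point on `l`
collinear with `p`. -/
structure GenQuadrangle (P L : Type*) (s t : ℕ) where
  inc : P → L → Prop
  pts_per_line : ∀ l : L, Nat.card {p : P // inc p l} = s + 1
  lines_per_pt : ∀ p : P, Nat.card {l : L // inc p l} = t + 1
  unique_line : ∀ ⦃p q : P⦄ ⦃l m : L⦄, p ≠ q →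
      inc p l → inc q l → inc p m → inc q m → l = m
  gq_axiom : ∀ (p : P) (l : L), ¬ inc p l →
      ∃! q : P, inc q l ∧ ∃ m : L, inc p m ∧ inc q m

/-- Two points are collinear if they are distinct and lie on a common line. -/
def GenQuadrangle.Collinear {P L : Type*} {s t : ℕ} (Q : GenQuadrangle P L s t)
    (p q : P) : Prop :=
  p ≠ q ∧ ∃ l : L, Q.inc p l ∧ Q.inc q l

section Aux

open Matrix Finset

lemma trace_eq_sum_eigen {m : Type*} [Fintype m] [DecidableEq m] {A : Matrix m m ℝ}
    (hA : A.IsHermitian) : A.trace = ∑ i, hA.eigenvalues i := by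
  have h1 : star (hA.eigenvectorUnitary : Matrix m m ℝ) * (hA.eigenvectorUnitary : Matrix m m ℝ)
      = 1 := Unitary.star_mul_self_of_mem hA.eigenvectorUnitary.2
  conv_lhs => rw [hA.spectral_theorem, Unitary.conjStarAlgAut_apply]
  rw [Matrix.trace_mul_cycle, h1, one_mul]
  simp [Matrix.trace_diagonal]

lemma trace_sq_eq_sum_eigen_sq {m : Type*} [Fintype m] [DecidableEq m] {A : Matrix m m ℝ}
    (hA : A.IsHermitian) : (A * A).trace = ∑ i, hA.eigenvalues i ^ 2 := by
  have h1 : star (hA.eigenvectorUnitary : Matrix m m ℝ) * (hA.eigenvectorUnitary : Matrix m m ℝ)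
      = 1 := Unitary.star_mul_self_of_mem hA.eigenvectorUnitary.2
  set U : Matrix m m ℝ := (hA.eigenvectorUnitary : Matrix m m ℝ)
  set D : Matrix m m ℝ := diagonal (RCLike.ofReal ∘ hA.eigenvalues)
  have h2 : A * A = U * (D * D) * star U := by
    conv_lhs => rw [hA.spectral_theorem, Unitary.conjStarAlgAut_apply]
    simp only [mul_assoc]
    rw [← mul_assoc (star U) U, h1, one_mul]
  rw [h2, Matrix.trace_mul_cycle, h1, one_mul]
  have h3 : D * D = diagonal (fun i => hA.eigenvalues i ^ 2) := by
    rw [Matrix.diagonal_mul_diagonal]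
    congr 1
    funext i
    simp [sq]
  rw [h3, Matrix.trace_diagonal]


open scoped Classical in
lemma srg_divisibility_aux {P : Type*} [Fintype P] [Nonempty P] {s t : ℕ}
    (Coll : P → P → Prop) (hColl_symm : ∀ {p q}, Coll p q → Coll q p)
    (hColl_irrefl : ∀ p, ¬ Coll p p)
    (hdeg : ∀ p, (univ.filter (Coll p)).card = s * (t + 1))
    (hlam : ∀ p q, Coll p q → (univ.filter (fun r => Coll p r ∧ Coll q r)).card = s - 1)
    (hmu : ∀ p q, p ≠ q → ¬ Coll p q →
      (univ.filter (fun r => Coll p r ∧ Coll q r)).card = t + 1)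
    (hn : Fintype.card P = (s + 1) * (s * t + 1))
    (hs : 1 ≤ s) (ht : 1 ≤ t) :
    ∃ m : ℕ, m * (s + t) = s * t * (s + 1) * (t + 1) := by
  classical
  set A : Matrix P P ℝ := Matrix.of (fun p q => if Coll p q then (1:ℝ) else 0) with hAdef
  set K : ℝ := (s : ℝ) * ((t : ℝ) + 1) with hK
  set R : ℝ := (s : ℝ) - 1 with hR
  set S' : ℝ := -((t : ℝ) + 1) with hS'
  set Jm : Matrix P P ℝ := Matrix.of (fun _ _ => (1:ℝ)) with hJ
  have hsymmA : A.IsHermitian := by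
    ext p q
    simp only [hAdef, Matrix.conjTranspose_apply, Matrix.of_apply, star_trivial]
    by_cases h : Coll q p
    · simp [h, hColl_symm h]
    · have h' : ¬ Coll p q := fun hc => h (hColl_symm hc)
      simp [h, h']
  have hdiagA : ∀ p, A p p = 0 := fun p => by simp [hAdef, hColl_irrefl p]
  have hAA : ∀ p q, (A * A) p q =
      ((univ.filter (fun r => Coll p r ∧ Coll q r)).card : ℝ) := by
    intro p q
    rw [Matrix.mul_apply]
    have : ∀ r, A p r * A r q = if Coll p r ∧ Coll q r then (1:ℝ) else 0 := by
      intro r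
      by_cases h1 : Coll p r <;> by_cases h2 : Coll q r
      · have h2' : Coll r q := hColl_symm h2
        simp [hAdef, h1, h2, h2']
      · have h2' : ¬ Coll r q := fun hc => h2 (hColl_symm hc)
        simp [hAdef, h1, h2, h2']
      · simp [hAdef, h1, h2]
      · simp [hAdef, h1, h2]
    rw [Finset.sum_congr rfl (fun r _ => this r), Finset.sum_boole]
  have hA2 : A * A = (R + S') • A + (-(R * S')) • (1 : Matrix P P ℝ) + ((t:ℝ)+1) • Jm := by
    ext p q
    rw [hAA p q]
    simp only [Matrix.add_apply, Matrix.smul_apply, smul_eq_mul, hJ, Matrix.of_apply]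
    by_cases hpq : p = q
    · subst hpq
      have : (univ.filter (fun r => Coll p r ∧ Coll p r)) = univ.filter (Coll p) := by
        simp only [and_self]
      rw [this, hdeg p, Matrix.one_apply_eq, hdiagA p]
      push_cast [hK, hR, hS']
      ring
    · by_cases hc : Coll p q
      · rw [hlam p q hc]
        have h1 : A p q = 1 := by simp [hAdef, hc]
        rw [h1, Matrix.one_apply_ne hpq]
        rw [Nat.cast_sub hs]
        push_cast [hR, hS']
        ring
      · rw [hmu p q hpq hc]
        have h1 : A p q = 0 := by simp [hAdef, hc]
        rw [h1, Matrix.one_apply_ne hpq]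
        push_cast [hR, hS']
        ring
  have hAJ : A * Jm = K • Jm := by
    ext p q
    rw [Matrix.mul_apply]
    simp only [hJ, Matrix.of_apply, mul_one, Matrix.smul_apply, smul_eq_mul]
    have : ∀ r, A p r = if Coll p r then (1:ℝ) else 0 := fun r => rfl
    rw [Finset.sum_congr rfl (fun r _ => this r), Finset.sum_boole, hdeg p, hK]
    push_cast
    ring
  set C : Matrix P P ℝ := A * A - (R + S') • A + (R * S') • (1 : Matrix P P ℝ) with hCdef
  have hC : C = ((t:ℝ)+1) • Jm := by
    rw [hCdef, hA2]
    module
  have hAC : A * C = K • C := by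
    rw [hC, Matrix.mul_smul, hAJ, smul_comm]
  -- eigenvalue cubic
  have hcube : ∀ i, (hsymmA.eigenvalues i - R) * (hsymmA.eigenvalues i - S') *
      (hsymmA.eigenvalues i - K) = 0 := by
    intro i
    set x : ℝ := hsymmA.eigenvalues i with hx
    set v : P → ℝ := ⇑(hsymmA.eigenvectorBasis i) with hv
    have hv0 : v ≠ 0 := by
      intro h
      apply hsymmA.eigenvectorBasis.orthonormal.ne_zero i
      ext j
      exact congrFun h j
    have h1 : A *ᵥ v = x • v := hsymmA.mulVec_eigenvectorBasis i
    have hCv : C *ᵥ v = ((x - R) * (x - S')) • v := by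
      rw [hCdef]
      rw [Matrix.add_mulVec, Matrix.sub_mulVec, Matrix.smul_mulVec,
        Matrix.smul_mulVec, ← Matrix.mulVec_mulVec, h1, Matrix.mulVec_smul, h1,
        Matrix.one_mulVec]
      rw [smul_smul]
      module
    have h2 : (A * C) *ᵥ v = (K * ((x - R) * (x - S'))) • v := by
      rw [hAC, Matrix.smul_mulVec, hCv, smul_smul]
    have h3 : (A * C) *ᵥ v = (x * ((x - R) * (x - S'))) • v := by
      rw [← Matrix.mulVec_mulVec, hCv, Matrix.mulVec_smul, h1, smul_smul, mul_comm]
    have h4 : (x * ((x - R) * (x - S')) - K * ((x - R) * (x - S'))) • v = 0 := by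
      rw [sub_smul, h3.symm.trans h2]
      abel
    rcases smul_eq_zero.mp h4 with h5 | h5
    · linear_combination h5
    · exact absurd h5 hv0
  -- traces
  have htrA : A.trace = 0 := by
    rw [Matrix.trace]
    simp only [Matrix.diag_apply]
    rw [Finset.sum_congr rfl (fun p _ => hdiagA p)]
    simp
  have htrJ : Jm.trace = (Fintype.card P : ℝ) := by
    rw [Matrix.trace]
    simp [hJ, Matrix.diag]
  have htrAA : (A * A).trace = (Fintype.card P : ℝ) * K := by
    rw [hA2]
    simp only [Matrix.trace_add, Matrix.trace_smul, htrA, htrJ, Matrix.trace_one,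
      smul_eq_mul]
    rw [hR, hS', hK]
    ring
  -- sums of eigenvalues
  have hsum1 : ∑ i, hsymmA.eigenvalues i = 0 := by
    rw [← trace_eq_sum_eigen hsymmA, htrA]
  have hsum2 : ∑ i, hsymmA.eigenvalues i ^ 2 = (Fintype.card P : ℝ) * K := by
    rw [← trace_sq_eq_sum_eigen_sq hsymmA, htrAA]
  set F : Finset P := univ.filter (fun i => hsymmA.eigenvalues i = R) with hF
  have hsum3 : ∑ i, (hsymmA.eigenvalues i - K) * (hsymmA.eigenvalues i - S')
      = (F.card : ℝ) * ((R - K) * (R - S')) := by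
    rw [← Finset.sum_filter_add_sum_filter_not univ (fun i => hsymmA.eigenvalues i = R)]
    have e1 : ∑ i ∈ F, (hsymmA.eigenvalues i - K) * (hsymmA.eigenvalues i - S')
        = (F.card : ℝ) * ((R - K) * (R - S')) := by
      rw [Finset.sum_congr rfl (fun i hi => ?_), Finset.sum_const, nsmul_eq_mul]
      simp only [hF, mem_filter, mem_univ, true_and] at hi
      rw [hi]
    have e2 : ∑ i ∈ univ.filter (fun i => ¬ hsymmA.eigenvalues i = R),
        (hsymmA.eigenvalues i - K) * (hsymmA.eigenvalues i - S') = 0 := by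
      refine Finset.sum_eq_zero (fun i hi => ?_)
      simp only [mem_filter, mem_univ, true_and] at hi
      have hc := hcube i
      have hR0 : hsymmA.eigenvalues i - R ≠ 0 := sub_ne_zero.mpr hi
      rcases mul_eq_zero.mp hc with h | h
      · rcases mul_eq_zero.mp h with h' | h'
        · exact absurd h' hR0
        · rw [h']; ring
      · rw [h]; ring
    rw [e1, e2, add_zero]
  have hexp : ∑ i, (hsymmA.eigenvalues i - K) * (hsymmA.eigenvalues i - S')
      = (∑ i, hsymmA.eigenvalues i ^ 2) - (K + S') * (∑ i, hsymmA.eigenvalues i)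
        + (Fintype.card P : ℝ) * (K * S') := by
    rw [Finset.mul_sum, ← Finset.sum_sub_distrib]
    rw [show (Fintype.card P : ℝ) * (K * S') = ∑ _i : P, K * S' by
      rw [Finset.sum_const, nsmul_eq_mul, card_univ]]
    rw [← Finset.sum_add_distrib]
    exact Finset.sum_congr rfl (fun i _ => by ring)
  rw [hexp, hsum1, hsum2] at hsum3
  have hnR : (Fintype.card P : ℝ) = ((s:ℝ) + 1) * ((s:ℝ) * t + 1) := by
    rw [hn]; push_cast; ring
  rw [hnR] at hsum3
  -- extract the equation
  have hmain : (F.card : ℝ) * ((s : ℝ) + t) * ((s : ℝ) * t + 1)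
      = ((s : ℝ) * t * ((s : ℝ) + 1) * ((t : ℝ) + 1)) * ((s : ℝ) * t + 1) := by
    have h := hsum3
    push_cast [hK, hR, hS'] at h ⊢
    nlinarith [h]
  have hmain2 : (F.card : ℝ) * ((s : ℝ) + t)
      = (s : ℝ) * t * ((s : ℝ) + 1) * ((t : ℝ) + 1) := by
    have hne : ((s : ℝ) * t + 1) ≠ 0 := by positivity
    exact mul_right_cancel₀ hne hmain
  refine ⟨F.card, ?_⟩
  exact_mod_cast hmain2

end Aux

namespace GenQuadrangle

open Finset

variable {P L : Type*} {s t : ℕ} (Q : GenQuadrangle P L s t)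

lemma collinear_symm {p q : P} (h : Q.Collinear p q) : Q.Collinear q p := by
  obtain ⟨hne, l, hp, hq⟩ := h
  exact ⟨hne.symm, l, hq, hp⟩

lemma not_collinear_self (p : P) : ¬ Q.Collinear p p := fun h => h.1 rfl

section Counting

variable [Fintype P] [Fintype L]

open scoped Classical

lemma card_pts_on_line (l : L) : (univ.filter (fun p : P => Q.inc p l)).card = s + 1 := by
  rw [← Fintype.card_subtype, ← Nat.card_eq_fintype_card, Q.pts_per_line]

lemma card_lines_through (p : P) : (univ.filter (fun l : L => Q.inc p l)).card = t + 1 := by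
  rw [← Fintype.card_subtype, ← Nat.card_eq_fintype_card, Q.lines_per_pt]

lemma card_nbrs (p : P) : (univ.filter (Q.Collinear p)).card = s * (t + 1) := by
  have hset : (univ.filter (Q.Collinear p)) =
      (univ.filter (fun l : L => Q.inc p l)).biUnion
        (fun l => (univ.filter (fun q : P => Q.inc q l)).erase p) := by
    ext q
    simp only [mem_filter, mem_univ, true_and, mem_biUnion, mem_erase]
    constructor
    · rintro ⟨hne, l, hpl, hql⟩
      exact ⟨l, hpl, fun h => hne h.symm, hql⟩
    · rintro ⟨l, hpl, hqp, hql⟩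
      exact ⟨fun h => hqp h.symm, l, hpl, hql⟩
  rw [hset, card_biUnion]
  · have hterm : ∀ l ∈ univ.filter (fun l : L => Q.inc p l),
        ((univ.filter (fun q : P => Q.inc q l)).erase p).card = s := by
      intro l hl
      simp only [mem_filter, mem_univ, true_and] at hl
      rw [card_erase_of_mem (by simp [hl]), Q.card_pts_on_line]
      simp
    rw [Finset.sum_congr rfl hterm, Finset.sum_const, Q.card_lines_through,
      smul_eq_mul, mul_comm]
  · intro l hl m hm hlm
    simp only [mem_coe, mem_filter, mem_univ, true_and] at hl hm
    refine Finset.disjoint_left.2 (fun q hq hq' => ?_)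
    simp only [mem_erase, mem_filter, mem_univ, true_and] at hq hq'
    exact hlm (Q.unique_line (Ne.symm hq.1) hl hq.2 hm hq'.2)

lemma mem_line_of_common {p q r : P} {l : L} (hne : p ≠ q)
    (hpl : Q.inc p l) (hql : Q.inc q l)
    (hpr : Q.Collinear p r) (hqr : Q.Collinear q r) : Q.inc r l := by
  by_contra hrl
  obtain ⟨w, _, hw⟩ := Q.gq_axiom r l hrl
  obtain ⟨_, m, hpm, hrm⟩ := hpr
  obtain ⟨_, m', hqm, hrm'⟩ := hqr
  exact hne ((hw p ⟨hpl, m, hrm, hpm⟩).trans (hw q ⟨hql, m', hrm', hqm⟩).symm)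

lemma card_common_of_collinear {p q : P} (h : Q.Collinear p q) :
    (univ.filter (fun r => Q.Collinear p r ∧ Q.Collinear q r)).card = s - 1 := by
  obtain ⟨hne, l, hpl, hql⟩ := h
  have hset : (univ.filter (fun r => Q.Collinear p r ∧ Q.Collinear q r)) =
      ((univ.filter (fun r : P => Q.inc r l)).erase p).erase q := by
    ext r
    simp only [mem_filter, mem_univ, true_and, mem_erase]
    constructor
    · rintro ⟨hpr, hqr⟩
      exact ⟨fun h => hqr.1 h.symm, fun h => hpr.1 h.symm,
        Q.mem_line_of_common hne hpl hql hpr hqr⟩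
    · rintro ⟨hrq, hrp, hrl⟩
      exact ⟨⟨fun h => hrp h.symm, l, hpl, hrl⟩, ⟨fun h => hrq h.symm, l, hql, hrl⟩⟩
  have hq : q ∈ (univ.filter (fun r : P => Q.inc r l)).erase p := by
    simp only [mem_erase, mem_filter, mem_univ, true_and]; exact ⟨hne.symm, hql⟩
  have hp : p ∈ univ.filter (fun r : P => Q.inc r l) := by
    simp only [mem_filter, mem_univ, true_and]; exact hpl
  rw [hset, card_erase_of_mem hq, card_erase_of_mem hp, Q.card_pts_on_line]
  simp

lemma card_common_of_not_collinear {p q : P} (hne : p ≠ q) (h : ¬ Q.Collinear p q) :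
    (univ.filter (fun r => Q.Collinear p r ∧ Q.Collinear q r)).card = t + 1 := by
  have hpnl : ∀ {l : L}, Q.inc q l → ¬ Q.inc p l := fun {l} hql hpl => h ⟨hne, l, hpl, hql⟩
  rw [← Q.card_lines_through (p := q)]
  refine (Finset.card_bij
    (fun l hl => (Q.gq_axiom p l (hpnl (by simpa using hl))).exists.choose) ?_ ?_ ?_).symm
  · intro l hl
    simp only [mem_filter, mem_univ, true_and] at hl ⊢
    obtain ⟨hrl, m, hpm, hrm⟩ := (Q.gq_axiom p l (hpnl hl)).exists.choose_spec
    set r := (Q.gq_axiom p l (hpnl hl)).exists.choose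
    have hrp : r ≠ p := fun hrp => hpnl hl (hrp ▸ hrl)
    have hpr : Q.Collinear p r := ⟨hrp.symm, m, hpm, hrm⟩
    have hrq : r ≠ q := fun hrq => h (hrq ▸ hpr)
    exact ⟨hpr, ⟨hrq.symm, l, hl, hrl⟩⟩
  · intro l hl0 l' hl0' heq
    have hl : Q.inc q l := by simpa using hl0
    have hl' : Q.inc q l' := by simpa using hl0'
    have heq' : (Q.gq_axiom p l (hpnl hl)).exists.choose
        = (Q.gq_axiom p l' (hpnl hl')).exists.choose := heq
    obtain ⟨hrl, m, hpm, hrm⟩ := (Q.gq_axiom p l (hpnl hl)).exists.choose_spec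
    obtain ⟨hrl', -⟩ := (Q.gq_axiom p l' (hpnl hl')).exists.choose_spec
    set r := (Q.gq_axiom p l (hpnl hl)).exists.choose with hrdef
    have hrq : r ≠ q := by
      intro hrq
      exact h ⟨hne, m, hpm, hrq ▸ hrm⟩
    rw [← heq'] at hrl'
    exact Q.unique_line (Ne.symm hrq) hl hrl hl' hrl'
  · intro r hr
    simp only [mem_filter, mem_univ, true_and] at hr
    obtain ⟨⟨hpr, m, hpm, hrm⟩, ⟨hqr, l, hql, hrl⟩⟩ := hr
    refine ⟨l, by simpa using hql, ?_⟩
    show (Q.gq_axiom p l (hpnl hql)).exists.choose = r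
    exact (Q.gq_axiom p l (hpnl hql)).unique
      (Q.gq_axiom p l (hpnl hql)).exists.choose_spec ⟨hrl, m, hpm, hrm⟩

include Q in
lemma card_points [Nonempty P] (hs : 1 ≤ s) :
    Fintype.card P = (s + 1) * (s * t + 1) := by
  obtain ⟨p₀⟩ := ‹Nonempty P›
  set N : Finset P := univ.filter (Q.Collinear p₀) with hN
  set NN : Finset P := univ.filter (fun q : P => q ≠ p₀ ∧ ¬ Q.Collinear p₀ q) with hNN
  set S : Finset (P × P) := univ.filter
    (fun x => (x.1 ≠ p₀ ∧ ¬ Q.Collinear p₀ x.1) ∧ Q.Collinear p₀ x.2 ∧ Q.Collinear x.1 x.2)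
    with hS
  have hc1 : S.card = NN.card * (t + 1) := by
    rw [Finset.card_eq_sum_card_fiberwise (f := Prod.fst) (t := NN)
      (fun x hx => by simp only [hS, mem_coe, mem_filter, mem_univ, true_and] at hx
                      simp only [hNN, mem_coe, mem_filter, mem_univ, true_and]; exact hx.1)]
    rw [Finset.sum_congr rfl (fun q hq => ?_), Finset.sum_const, smul_eq_mul]
    simp only [hNN, mem_filter, mem_univ, true_and] at hq
    rw [← Q.card_common_of_not_collinear (p := p₀) (q := q) (fun h => hq.1 h.symm) hq.2]
    refine Finset.card_bij (fun x _ => x.2) ?_ ?_ ?_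
    · intro x hx
      simp only [hS, mem_filter, mem_univ, true_and] at hx
      simp only [mem_filter, mem_univ, true_and]
      exact ⟨hx.1.2.1, hx.2 ▸ hx.1.2.2⟩
    · intro x hx y hy hxy
      simp only [mem_filter] at hx hy
      exact Prod.ext (hx.2.trans hy.2.symm) hxy
    · intro z hz
      simp only [mem_filter, mem_univ, true_and] at hz
      refine ⟨(q, z), ?_, rfl⟩
      simp only [hS, mem_filter, mem_univ, true_and, and_true]
      exact ⟨⟨hq.1, hq.2⟩, hz.1, hz.2⟩
  have hc2 : S.card = (s * (t + 1)) * (s * t) := by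
    rw [Finset.card_eq_sum_card_fiberwise (f := Prod.snd) (t := N)
      (fun x hx => by simp only [hS, mem_coe, mem_filter, mem_univ, true_and] at hx
                      simp only [hN, mem_coe, mem_filter, mem_univ, true_and]; exact hx.2.1)]
    have hterm : ∀ z ∈ N, (S.filter (fun x => x.2 = z)).card = s * t := by
      intro z hz
      simp only [hN, mem_filter, mem_univ, true_and] at hz
      have hfib : (S.filter (fun x => x.2 = z)).card
          = (univ.filter (fun q : P => q ≠ p₀ ∧ ¬ Q.Collinear p₀ q ∧ Q.Collinear q z)).card := by
        refine Finset.card_bij (fun x _ => x.1) ?_ ?_ ?_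
        · intro x hx
          simp only [hS, mem_filter, mem_univ, true_and] at hx
          simp only [mem_filter, mem_univ, true_and]
          exact ⟨hx.1.1.1, hx.1.1.2, hx.2 ▸ hx.1.2.2⟩
        · intro x hx y hy hxy
          simp only [mem_filter] at hx hy
          exact Prod.ext hxy (hx.2.trans hy.2.symm)
        · intro q hq
          simp only [mem_filter, mem_univ, true_and] at hq
          refine ⟨(q, z), ?_, rfl⟩
          simp only [hS, mem_filter, mem_univ, true_and, and_true]
          exact ⟨⟨hq.1, hq.2.1⟩, hz, hq.2.2⟩
      rw [hfib]
      have hsplit : (univ.filter (fun q : P => q ≠ p₀ ∧ ¬ Q.Collinear p₀ q ∧ Q.Collinear q z))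
          = (univ.filter (Q.Collinear z)) \
            (insert p₀ (univ.filter (fun r : P => Q.Collinear p₀ r ∧ Q.Collinear z r))) := by
        ext q
        simp only [mem_filter, mem_univ, true_and, mem_sdiff, mem_insert, not_or, not_and]
        constructor
        · rintro ⟨h1, h2, h3⟩
          exact ⟨Q.collinear_symm h3, h1, fun hc => absurd hc h2⟩
        · rintro ⟨h1, h2, h3⟩
          exact ⟨h2, fun hc => (h3 hc) h1, Q.collinear_symm h1⟩
      have hsub : insert p₀ (univ.filter (fun r : P => Q.Collinear p₀ r ∧ Q.Collinear z r))
          ⊆ univ.filter (Q.Collinear z) := by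
        intro q hq
        simp only [mem_insert, mem_filter, mem_univ, true_and] at hq ⊢
        rcases hq with rfl | hq
        · exact Q.collinear_symm hz
        · exact hq.2
      rw [hsplit, card_sdiff_of_subset hsub, card_insert_of_notMem
        (by simp only [mem_filter, mem_univ, true_and, not_and]
            exact fun hc => absurd hc (Q.not_collinear_self p₀)),
        Q.card_common_of_collinear hz, Q.card_nbrs]
      have h1 : s - 1 + 1 = s := Nat.succ_pred_eq_of_pos hs
      have h2 : s * (t + 1) = s * t + s := by ring
      omega
    rw [Finset.sum_congr rfl hterm, Finset.sum_const, smul_eq_mul, hN, Q.card_nbrs]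
  have hNNcard : NN.card = s * s * t := by
    have h1 : NN.card * (t + 1) = (s * s * t) * (t + 1) := by
      rw [← hc1, hc2]; ring
    exact Nat.eq_of_mul_eq_mul_right (Nat.succ_pos t) h1
  have hXN : N.card + (univ.filter (fun q : P => ¬ Q.Collinear p₀ q)).card
      = Fintype.card P := by
    rw [← Finset.card_univ]
    exact Finset.card_filter_add_card_filter_not _
  have hX : (univ.filter (fun q : P => ¬ Q.Collinear p₀ q)) = insert p₀ NN := by
    ext q
    simp only [mem_filter, mem_univ, true_and, mem_insert, hNN]
    constructor
    · intro h
      by_cases hq : q = p₀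
      · exact Or.inl hq
      · exact Or.inr ⟨hq, h⟩
    · rintro (rfl | ⟨h1, h2⟩)
      · exact Q.not_collinear_self _
      · exact h2
  have hp₀NN : p₀ ∉ NN := by simp [hNN]
  rw [hX, card_insert_of_notMem hp₀NN, hNNcard, Q.card_nbrs] at hXN
  rw [← hXN]; ring

end Counting

end GenQuadrangle


open Finset in
open scoped Classical in
/-- In a finite generalised quadrangle of order (s,t) with s,t ≥ 1, s+t
divides st(st+1). -/
theorem s_add_t_dvd {P L : Type*} [Fintype P] [Fintype L] [Nonempty P]
    {s t : ℕ} (hs : 1 ≤ s) (ht : 1 ≤ t) (Q : GenQuadrangle P L s t) :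
    (s + t) ∣ s * t * (s * t + 1) := by
  obtain ⟨m, hm⟩ := srg_divisibility_aux (P := P) (s := s) (t := t) Q.Collinear
    (fun {p q} h => Q.collinear_symm h) (Q.not_collinear_self)
    (Q.card_nbrs) (fun p q h => Q.card_common_of_collinear h)
    (fun p q hne h => Q.card_common_of_not_collinear hne h)
    (Q.card_points hs) hs ht
  have dvd1 : (s + t) ∣ s * t * (s + 1) * (t + 1) := ⟨m, by rw [← hm]; ring⟩
  have hsplit : s * t * (s + 1) * (t + 1) = s * t * (s * t + 1) + s * t * (s + t) := by
    ring
  have dvd2 : (s + t) ∣ s * t * (s + t) := dvd_mul_left _ _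
  have := Nat.dvd_sub dvd1 dvd2
  rwa [hsplit, Nat.add_sub_cancel] at this
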